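/- Fix an integer 0 ≤ i ≤ k−1 with A_i ≠ ∅ and vertices x, y ∈ V, and let m = max{d_G(x, p_i(x)), d_G(y, p_i(y)), d_G(x, y)}. Then at least one of the following holds: (1) d_H(x, y) ≤ 5m; or (2) A_{i+1} ≠ ∅ and d_H(x, p_{i+1}(x)) ≤ 4m. -/

import Mathlib

open scoped ENNReal Classical

namespace ASP

variable {V : Type*}

noncomputable def wWeight {G : SimpleGraph V} (w : V → V → ℝ≥0∞) {x y : V}
    (p : G.Walk x y) : ℝ≥0∞ :=
  (p.darts.map fun d => w d.toProd.1 d.toProd.2).sum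

noncomputable def gdist (G : SimpleGraph V) (w : V → V → ℝ≥0∞) (x y : V) : ℝ≥0∞ :=
  ⨅ p : G.Walk x y, wWeight w p

noncomputable def maxW {G : SimpleGraph V} (w : V → V → ℝ≥0∞) {x y : V}
    (p : G.Walk x y) : ℝ≥0∞ :=
  (p.darts.map fun d => w d.toProd.1 d.toProd.2).foldr max 0

/-- The bunch of a vertex `u` of level `i`: all vertices of `A i` strictly closer to `u` than
`A (i+1)` (vacuously all of `A i` if `A (i+1) = ∅`), together with the pivots of all
nonempty higher levels. -/
def bunch (G : SimpleGraph V) (w : V → V → ℝ≥0∞) (A : ℕ → Set V) (pv : ℕ → V → V)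
    (k i : ℕ) (u : V) : Set V :=
  {v | v ∈ A i ∧ ∀ a ∈ A (i + 1), gdist G w u v < gdist G w u a} ∪
    {v | ∃ j, i < j ∧ j < k ∧ (A j).Nonempty ∧ v = pv j u}

/-- The emulator graph `H`: an edge `{u, v}` for every `u ∈ A i \ A (i+1)` and `v ∈ B(u)`. -/
def emulGraph (G : SimpleGraph V) (w : V → V → ℝ≥0∞) (A : ℕ → Set V) (pv : ℕ → V → V)
    (k : ℕ) : SimpleGraph V where
  Adj u v := u ≠ v ∧ ∃ i, (u ∈ A i ∧ u ∉ A (i + 1) ∧ v ∈ bunch G w A pv k i u) ∨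
      (v ∈ A i ∧ v ∉ A (i + 1) ∧ u ∈ bunch G w A pv k i v)
  symm := ⟨fun u v h => ⟨h.1.symm, h.2.imp fun _ hi => hi.symm⟩⟩
  loopless := ⟨fun u h => h.1 rfl⟩


lemma gdist_le_wWeight (G : SimpleGraph V) (w : V → V → ℝ≥0∞) {x y : V} (p : G.Walk x y) :
    gdist G w x y ≤ wWeight w p := iInf_le _ p

lemma gdist_self (G : SimpleGraph V) (w : V → V → ℝ≥0∞) (x : V) : gdist G w x x = 0 :=
  le_antisymm ((gdist_le_wWeight G w SimpleGraph.Walk.nil).trans (by simp [wWeight])) zero_le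

lemma wWeight_append (G : SimpleGraph V) (w : V → V → ℝ≥0∞) {x y z : V}
    (p : G.Walk x y) (q : G.Walk y z) :
    wWeight w (p.append q) = wWeight w p + wWeight w q := by
  simp [wWeight, SimpleGraph.Walk.darts_append]

lemma gdist_triangle (G : SimpleGraph V) (w : V → V → ℝ≥0∞) (x y z : V) :
    gdist G w x z ≤ gdist G w x y + gdist G w y z := by
  show gdist G w x z ≤ (⨅ p : G.Walk x y, wWeight w p) + (⨅ q : G.Walk y z, wWeight w q)
  rw [ENNReal.iInf_add]
  refine le_iInf fun p => ?_
  rw [ENNReal.add_iInf]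
  refine le_iInf fun q => ?_
  exact (gdist_le_wWeight G w (p.append q)).trans (wWeight_append G w p q).le

lemma wWeight_reverse (G : SimpleGraph V) (w : V → V → ℝ≥0∞)
    (hwsym : ∀ u v, G.Adj u v → w u v = w v u) {x y : V} (p : G.Walk x y) :
    wWeight w p.reverse = wWeight w p := by
  unfold wWeight
  rw [SimpleGraph.Walk.darts_reverse, List.map_reverse, List.sum_reverse, List.map_map]
  refine congrArg List.sum (List.map_congr_left fun d _ => ?_)
  simp only [Function.comp_apply, SimpleGraph.Dart.symm_toProd, Prod.fst_swap, Prod.snd_swap]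
  exact (hwsym _ _ d.adj).symm

lemma gdist_symm (G : SimpleGraph V) (w : V → V → ℝ≥0∞)
    (hwsym : ∀ u v, G.Adj u v → w u v = w v u) (x y : V) :
    gdist G w x y = gdist G w y x := by
  unfold gdist
  refine le_antisymm (le_iInf fun q => ?_) (le_iInf fun q => ?_) <;>
    exact iInf_le_of_le q.reverse (wWeight_reverse G w hwsym q).le

lemma gdist_le_of_adj (G : SimpleGraph V) (w : V → V → ℝ≥0∞) {x y : V} (h : G.Adj x y) :
    gdist G w x y ≤ w x y :=
  (gdist_le_wWeight G w (SimpleGraph.Walk.cons h SimpleGraph.Walk.nil)).trans (by simp [wWeight])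

lemma A_mono (A : ℕ → Set V) (hAnest : ∀ i, A (i + 1) ⊆ A i) {a b : ℕ} (hab : a ≤ b) :
    A b ⊆ A a := by
  induction hab with
  | refl => exact subset_rfl
  | step h ih => exact (hAnest _).trans ih

lemma exists_level (A : ℕ → Set V) (hA0 : A 0 = Set.univ) {z : V} {j : ℕ} (hz : z ∉ A j) :
    ∃ l, l < j ∧ z ∈ A l ∧ z ∉ A (l + 1) := by
  induction j with
  | zero => exact absurd (hA0 ▸ Set.mem_univ z) hz
  | succ j ih =>
    by_cases h : z ∈ A j
    · exact ⟨j, Nat.lt_succ_self j, h, hz⟩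
    · obtain ⟨l, hl, h1, h2⟩ := ih h
      exact ⟨l, hl.trans (Nat.lt_succ_self j), h1, h2⟩


lemma adj_bunch (G : SimpleGraph V) (w : V → V → ℝ≥0∞) (A : ℕ → Set V) (pv : ℕ → V → V)
    (k : ℕ) {z z' : V} {j : ℕ} (h1 : z ∈ A j) (h2 : z ∉ A (j + 1)) (h3 : z' ∈ A j)
    (h4 : ∀ a ∈ A (j + 1), gdist G w z z' < gdist G w z a) :
    z = z' ∨ (emulGraph G w A pv k).Adj z z' := by
  by_cases he : z = z'
  · exact Or.inl he
  · exact Or.inr ⟨he, j, Or.inl ⟨h1, h2, Or.inl ⟨h3, h4⟩⟩⟩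

lemma adj_pivot (G : SimpleGraph V) (w : V → V → ℝ≥0∞) (A : ℕ → Set V) (pv : ℕ → V → V)
    (k : ℕ) (hA0 : A 0 = Set.univ) {z : V} {j : ℕ} (hz : z ∉ A j) (hjk : j < k)
    (hAj : (A j).Nonempty) :
    z = pv j z ∨ (emulGraph G w A pv k).Adj z (pv j z) := by
  obtain ⟨l, hlj, hl1, hl2⟩ := exists_level A hA0 hz
  by_cases he : z = pv j z
  · exact Or.inl he
  · exact Or.inr ⟨he, l, Or.inl ⟨hl1, hl2, Or.inr ⟨j, hlj, hjk, hAj, rfl⟩⟩⟩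

lemma gdist_le_of_eq_or_adj (G : SimpleGraph V) (w : V → V → ℝ≥0∞) {x y : V}
    (h : x = y ∨ G.Adj x y) : gdist G w x y ≤ w x y := by
  rcases h with rfl | h
  · exact (gdist_self G w x).le.trans zero_le
  · exact gdist_le_of_adj G w h


lemma dH_zero (G : SimpleGraph V) (w : V → V → ℝ≥0∞)
    (hwsym : ∀ u v, G.Adj u v → w u v = w v u)
    (k : ℕ) (A : ℕ → Set V) (hA0 : A 0 = Set.univ)
    (hAnest : ∀ i, A (i + 1) ⊆ A i) (hAk : A k = ∅)
    (pv : ℕ → V → V)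
    (hpv : ∀ i, i < k → ∀ v : V, (A i).Nonempty →
      pv i v ∈ A i ∧ ∀ a ∈ A i, gdist G w v (pv i v) ≤ gdist G w v a) :
    ∀ (n j : ℕ), j < k → k - j ≤ n → ∀ z z', z ∈ A j → (A j).Nonempty →
      gdist G w z z' = 0 →
      gdist (emulGraph G w A pv k) (gdist G w) z z' = 0 := by
  have hsymG : ∀ a b, gdist G w a b = gdist G w b a := gdist_symm G w hwsym
  set H := emulGraph G w A pv k with hHdef
  set dG := gdist G w with hdGdef
  set dH := gdist H dG with hdHdef
  have hsymH : ∀ a b, dH a b = dH b a := gdist_symm H dG fun u v _ => hsymG u v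
  have htri : ∀ a b c, dG a c ≤ dG a b + dG b c := gdist_triangle G w
  have htriH : ∀ a b c, dH a c ≤ dH a b + dH b c := gdist_triangle H dG
  have hstep : ∀ a b : V, (a = b ∨ H.Adj a b) → dH a b ≤ dG a b := fun a b h =>
    gdist_le_of_eq_or_adj H dG h
  have hltk : ∀ j, (A j).Nonempty → j < k := by
    rintro j ⟨z, hz⟩
    by_contra h
    push_neg at h
    have : z ∈ A k := A_mono A hAnest h hz
    rw [hAk] at this
    exact this
  intro n
  induction n with
  | zero => intro j hjk hn; omega
  | succ n ih =>
    intro j hjk hn z z' hzj hAj hzz'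
    refine le_antisymm ?_ zero_le
    by_cases hz1 : z ∈ A (j + 1)
    · have hne : (A (j + 1)).Nonempty := ⟨z, hz1⟩
      have hjk1 : j + 1 < k := hltk _ hne
      exact (ih (j + 1) hjk1 (by omega) z z' hz1 hne hzz').le
    · by_cases hp : ∃ a ∈ A (j + 1), dG z a = 0
      · obtain ⟨a, ha, ha0⟩ := hp
        have hne : (A (j + 1)).Nonempty := ⟨a, ha⟩
        have hjk1 : j + 1 < k := hltk _ hne
        obtain ⟨hpA, hpmin⟩ := hpv (j + 1) hjk1 z hne
        have hzp : dG z (pv (j + 1) z) = 0 :=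
          le_antisymm ((hpmin a ha).trans ha0.le) zero_le
        have he1 : dH z (pv (j + 1) z) ≤ 0 := by
          have hadj : z = pv (j + 1) z ∨ H.Adj z (pv (j + 1) z) := by
            by_cases he : z = pv (j + 1) z
            · exact Or.inl he
            · exact Or.inr ⟨he, j, Or.inl ⟨hzj, hz1,
                Or.inr ⟨j + 1, Nat.lt_succ_self j, hjk1, hne, rfl⟩⟩⟩
          exact (hstep _ _ hadj).trans hzp.le
        have hpz' : dG (pv (j + 1) z) z' = 0 := by
          refine le_antisymm ?_ zero_le
          calc dG (pv (j + 1) z) z' ≤ dG (pv (j + 1) z) z + dG z z' := htri _ _ _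
          _ = 0 := by rw [hsymG (pv (j + 1) z) z, hzp, hzz', add_zero]
        have h2 := ih (j + 1) hjk1 (by omega) (pv (j + 1) z) z' hpA hne hpz'
        calc dH z z' ≤ dH z (pv (j + 1) z) + dH (pv (j + 1) z) z' := htriH _ _ _
        _ ≤ 0 + 0 := add_le_add he1 h2.le
        _ = 0 := by simp
      · push_neg at hp
        have hppos : ∀ a ∈ A (j + 1), 0 < dG z a := fun a ha =>
          pos_iff_ne_zero.mpr (hp a ha)
        by_cases hz'j : z' ∈ A j
        · have := hstep z z' (adj_bunch G w A pv k hzj hz1 hz'j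
            (fun a ha => by show dG z z' < dG z a; rw [hzz']; exact hppos a ha))
          rw [hzz'] at this
          exact this
        · obtain ⟨hqA, hqmin⟩ := hpv j hjk z' hAj
          have hzq' : dG z' (pv j z') = 0 :=
            le_antisymm ((hqmin z hzj).trans_eq (by rw [hsymG z' z, hzz'])) zero_le
          have hzq : dG z (pv j z') = 0 := by
            refine le_antisymm ?_ zero_le
            calc dG z (pv j z') ≤ dG z z' + dG z' (pv j z') := htri _ _ _
            _ = 0 := by rw [hzz', hzq', add_zero]
          have e1 : dH z (pv j z') ≤ 0 := by
            have := hstep z (pv j z') (adj_bunch G w A pv k hzj hz1 hqA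
              (fun a ha => by show dG z (pv j z') < dG z a; rw [hzq]; exact hppos a ha))
            rw [hzq] at this
            exact this
          have e2 : dH (pv j z') z' ≤ 0 := by
            rw [hsymH]
            have := hstep z' (pv j z') (adj_pivot G w A pv k hA0 hz'j hjk hAj)
            rw [hzq'] at this
            exact this
          calc dH z z' ≤ dH z (pv j z') + dH (pv j z') z' := htriH _ _ _
          _ ≤ 0 + 0 := add_le_add e1 e2
          _ = 0 := by simp


/-- Lemma 3.2: with `m = max{d_G(x,p_i(x)), d_G(y,p_i(y)), d_G(x,y)}`, either
`d_H(x,y) ≤ 5m`, or `A_{i+1} ≠ ∅` and `d_H(x, p_{i+1}(x)) ≤ 4m`. -/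
theorem statement1 [Fintype V] (G : SimpleGraph V) (hconn : G.Connected)
    (w : V → V → ℝ≥0∞) (hwsym : ∀ u v, G.Adj u v → w u v = w v u)
    (hwfin : ∀ u v, G.Adj u v → w u v ≠ ⊤)
    (k : ℕ) (hk : 1 ≤ k) (A : ℕ → Set V) (hA0 : A 0 = Set.univ)
    (hAnest : ∀ i, A (i + 1) ⊆ A i) (hAk : A k = ∅)
    (pv : ℕ → V → V)
    (hpv : ∀ i, i < k → ∀ v : V, (A i).Nonempty →
      pv i v ∈ A i ∧ ∀ a ∈ A i, gdist G w v (pv i v) ≤ gdist G w v a)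
    (i : ℕ) (hi : i < k) (hAi : (A i).Nonempty) (x y : V) :
    gdist (emulGraph G w A pv k) (gdist G w) x y ≤
        5 * max (gdist G w x (pv i x)) (max (gdist G w y (pv i y)) (gdist G w x y)) ∨
      ((A (i + 1)).Nonempty ∧
        gdist (emulGraph G w A pv k) (gdist G w) x (pv (i + 1) x) ≤
          4 * max (gdist G w x (pv i x)) (max (gdist G w y (pv i y)) (gdist G w x y))) := by
  have hsymG : ∀ a b, gdist G w a b = gdist G w b a := gdist_symm G w hwsym
  set H := emulGraph G w A pv k with hHdef
  set dG := gdist G w with hdGdef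
  set dH := gdist H dG with hdHdef
  set m := max (dG x (pv i x)) (max (dG y (pv i y)) (dG x y)) with hmdef
  have hsymH : ∀ a b, dH a b = dH b a := gdist_symm H dG fun u v _ => hsymG u v
  have htri : ∀ a b c, dG a c ≤ dG a b + dG b c := gdist_triangle G w
  have htriH : ∀ a b c, dH a c ≤ dH a b + dH b c := gdist_triangle H dG
  have hstep : ∀ a b : V, (a = b ∨ H.Adj a b) → dH a b ≤ dG a b := fun a b h =>
    gdist_le_of_eq_or_adj H dG h
  have hltk : ∀ j, (A j).Nonempty → j < k := by
    rintro j ⟨z, hz⟩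
    by_contra h
    push_neg at h
    have : z ∈ A k := A_mono A hAnest h hz
    rw [hAk] at this
    exact this
  have hm1 : dG x (pv i x) ≤ m := le_max_left _ _
  have hm2 : dG y (pv i y) ≤ m := le_trans (le_max_left _ _) (le_max_right _ _)
  have hm3 : dG x y ≤ m := le_trans (le_max_right _ _) (le_max_right _ _)
  have hm4 : m ≤ 4 * m := by
    calc m = 1 * m := (one_mul m).symm
    _ ≤ 4 * m := mul_le_mul_left (by norm_num) m
  have hm13 : m ≤ 3 * m := by
    calc m = 1 * m := (one_mul m).symm
    _ ≤ 3 * m := mul_le_mul_left (by norm_num) m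
  by_cases hx1 : x ∈ A (i + 1)
  · right
    have hne : (A (i + 1)).Nonempty := ⟨x, hx1⟩
    refine ⟨hne, ?_⟩
    have hik : i + 1 < k := hltk _ hne
    have h0 : dG x (pv (i + 1) x) = 0 :=
      le_antisymm (((hpv (i + 1) hik x hne).2 x hx1).trans_eq (gdist_self G w x)) zero_le
    have := dH_zero G w hwsym k A hA0 hAnest hAk pv hpv k (i + 1) hik (by omega)
      x (pv (i + 1) x) hx1 hne h0
    exact this.le.trans zero_le
  · by_cases hcase : ∃ a ∈ A (i + 1), dG x a ≤ 4 * m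
    · right
      obtain ⟨a, haA, ha4⟩ := hcase
      have hne : (A (i + 1)).Nonempty := ⟨a, haA⟩
      refine ⟨hne, ?_⟩
      have hik : i + 1 < k := hltk _ hne
      have h1 : dH x (pv (i + 1) x) ≤ dG x (pv (i + 1) x) :=
        hstep _ _ (adj_pivot G w A pv k hA0 hx1 hik hne)
      exact h1.trans (((hpv (i + 1) hik x hne).2 a haA).trans ha4)
    · left
      push_neg at hcase
      obtain ⟨huA, humin⟩ := hpv i hi x hAi
      obtain ⟨hvA, hvmin⟩ := hpv i hi y hAi
      have hu1 : pv i x ∉ A (i + 1) := fun h =>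
        absurd (hcase _ h) (not_lt.mpr (hm1.trans hm4))
      have hy1 : y ∉ A (i + 1) := fun h =>
        absurd (hcase y h) (not_lt.mpr (hm3.trans hm4))
      have hduv : dG (pv i x) (pv i y) ≤ 3 * m := by
        calc dG (pv i x) (pv i y) ≤ dG (pv i x) x + dG x (pv i y) := htri _ _ _
        _ ≤ dG (pv i x) x + (dG x y + dG y (pv i y)) := add_le_add_right (htri _ _ _) _
        _ ≤ m + (m + m) := add_le_add (by rw [hsymG]; exact hm1) (add_le_add hm3 hm2)
        _ = 3 * m := by ring
      have hua : ∀ a ∈ A (i + 1), 3 * m < dG (pv i x) a := by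
        intro a ha
        by_contra h
        push_neg at h
        refine absurd (hcase a ha) (not_lt.mpr ?_)
        calc dG x a ≤ dG x (pv i x) + dG (pv i x) a := htri _ _ _
        _ ≤ m + 3 * m := add_le_add hm1 h
        _ = 4 * m := by ring
      have hya : ∀ a ∈ A (i + 1), 3 * m < dG y a := by
        intro a ha
        by_contra h
        push_neg at h
        refine absurd (hcase a ha) (not_lt.mpr ?_)
        calc dG x a ≤ dG x y + dG y a := htri _ _ _
        _ ≤ m + 3 * m := add_le_add hm3 h
        _ = 4 * m := by ring
      have exu : dH x (pv i x) ≤ m := by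
        by_cases hxi : x ∈ A i
        · exact (hstep _ _ (adj_bunch G w A pv k hxi hx1 huA
            (fun a ha => lt_of_le_of_lt (hm1.trans hm4) (hcase a ha)))).trans hm1
        · exact (hstep _ _ (adj_pivot G w A pv k hA0 hxi hi hAi)).trans hm1
      have euv : dH (pv i x) (pv i y) ≤ 3 * m :=
        (hstep _ _ (adj_bunch G w A pv k huA hu1 hvA
          (fun a ha => lt_of_le_of_lt hduv (hua a ha)))).trans hduv
      have eyv : dH y (pv i y) ≤ m := by
        by_cases hyi : y ∈ A i
        · exact (hstep _ _ (adj_bunch G w A pv k hyi hy1 hvA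
            (fun a ha => lt_of_le_of_lt (hm2.trans hm13) (hya a ha)))).trans hm2
        · exact (hstep _ _ (adj_pivot G w A pv k hA0 hyi hi hAi)).trans hm2
      calc dH x y ≤ dH x (pv i x) + dH (pv i x) y := htriH _ _ _
      _ ≤ dH x (pv i x) + (dH (pv i x) (pv i y) + dH (pv i y) y) :=
          add_le_add_right (htriH _ _ _) _
      _ ≤ m + (3 * m + m) := add_le_add exu (add_le_add euv
          (by rw [hsymH (pv i y) y]; exact eyv))
      _ = 5 * m := by ring


end ASP
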